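/- For all integers λ ≥ 1 and n ≥ 2 with λ dividing n − 1 and q = (n−1)/λ, deleting any set of at most q − 1 edges from the graph H_{n,λ} leaves a connected graph. -/

import Mathlib

namespace BroadcastPaper

/-- Vertex type of the graph `H_{n,λ}` (with `q = (n-1)/λ`): `none` is the hub `h`
and `some (i, a)` is the vertex `(i, a)`. -/
abbrev HubV (lam q : ℕ) : Type := Option (Fin lam × Fin q)

/-- Base relation of `H_{n,λ}`: two non-hub vertices are joined iff they lie in the
same block, and the hub is joined to every other vertex. -/
def hubRel (lam q : ℕ) : HubV lam q → HubV lam q → Prop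
  | none, some _ => True
  | some _, none => True
  | some x, some y => x.1 = y.1
  | none, none => False

/-- The graph `H_{n,λ}`: `λ` disjoint copies of the complete graph `K_q`
together with a hub adjacent to every other vertex. -/
def hubGraph (lam q : ℕ) : SimpleGraph (HubV lam q) :=
  SimpleGraph.fromRel (hubRel lam q)

open Classical in
lemma hub_key {lam q : ℕ} (hq : 1 ≤ q) (E' : Set (Sym2 (HubV lam q)))
    (hcard : E'.ncard ≤ q - 1) :
    ((hubGraph lam q).deleteEdges E').Connected := by
  set G := hubGraph lam q with hG
  set D := G.deleteEdges E' with hD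
  have hEfin : E'.Finite := Set.toFinite _
  have hGhub : ∀ p : Fin lam × Fin q, G.Adj none (some p) := by
    intro p
    simp [hG, hubGraph, SimpleGraph.fromRel_adj, hubRel]
  have hGblock : ∀ (i : Fin lam) (a b : Fin q), a ≠ b →
      G.Adj (some (i, a)) (some (i, b)) := by
    intro i a b hab
    simp [hG, hubGraph, SimpleGraph.fromRel_adj, hubRel, hab]
  have hreach : ∀ p : Fin lam × Fin q, D.Reachable none (some p) := by
    rintro ⟨i, a⟩
    by_cases h1 : s(none, some (i, a)) ∈ E'
    · by_cases h2 : ∃ b : Fin q, b ≠ a ∧ s(some (i, a), some (i, b)) ∉ E' ∧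
          s((none : HubV lam q), some (i, b)) ∉ E'
      · obtain ⟨b, hba, hvb, hnb⟩ := h2
        have a1 : D.Adj none (some (i, b)) := by
          rw [hD, SimpleGraph.deleteEdges_adj]; exact ⟨hGhub _, hnb⟩
        have a2 : D.Adj (some (i, b)) (some (i, a)) := by
          rw [hD, SimpleGraph.deleteEdges_adj]
          refine ⟨hGblock i b a hba, ?_⟩
          rw [Sym2.eq_swap]
          exact hvb
        exact a1.reachable.trans a2.reachable
      · exfalso
        push_neg at h2
        set v : HubV lam q := some (i, a) with hv
        set f : Fin q → Sym2 (HubV lam q) :=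
          fun b => if s(v, some (i, b)) ∈ E' then s(v, some (i, b))
            else s((none : HubV lam q), some (i, b)) with hf
        have hmapsto : ∀ b : Fin q, b ≠ a → f b ∈ E' \ {s((none : HubV lam q), v)} := by
          intro b hba
          by_cases hb : s(v, some (i, b)) ∈ E'
          · refine ⟨by simp [hf, hb], ?_⟩
            simp only [hf, if_pos hb]; simp [Sym2.eq_iff, hv]
          · refine ⟨by simp only [hf, if_neg hb]; exact h2 b hba hb, ?_⟩
            simp only [hf, if_neg hb]; simp [Sym2.eq_iff, hv, hba]
        have hinj : Set.InjOn f {b : Fin q | b ≠ a} := by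
          intro b hb c hc hbc
          simp only [Set.mem_setOf_eq] at hb hc
          by_cases p1 : s(v, some (i, b)) ∈ E' <;> by_cases p2 : s(v, some (i, c)) ∈ E' <;>
            simp only [hf, p1, p2, if_true, if_false] at hbc <;>
            simp [Sym2.eq_iff, hv, Prod.ext_iff] at hbc
          · rcases hbc with h | ⟨h, _⟩
            · exact h
            · exact absurd h.symm hc
          · exact hbc
        have hcard1 : ({b : Fin q | b ≠ a}).ncard = q - 1 := by
          have he : {b : Fin q | b ≠ a} = Set.univ \ {a} := by ext x; simp
          rw [he, Set.ncard_diff (by simp)]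
          simp [Set.ncard_univ]
        have hsub : f '' {b : Fin q | b ≠ a} ⊆ E' \ {s((none : HubV lam q), v)} := by
          rintro _ ⟨b, hb, rfl⟩; exact hmapsto b hb
        have h3 : q - 1 ≤ (E' \ {s((none : HubV lam q), v)}).ncard := by
          rw [← hcard1, ← Set.ncard_image_of_injOn hinj]
          exact Set.ncard_le_ncard hsub hEfin.diff
        have h4 : (E' \ {s((none : HubV lam q), v)}).ncard + 1 = E'.ncard :=
          Set.ncard_diff_singleton_add_one h1 hEfin
        omega
    · exact SimpleGraph.Adj.reachable
        (by rw [hD, SimpleGraph.deleteEdges_adj]; exact ⟨hGhub _, h1⟩)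
  constructor
  intro u v
  match u, v with
  | none, none => exact SimpleGraph.Reachable.refl _
  | none, some p => exact hreach p
  | some p, none => exact (hreach p).symm
  | some p, some p' => exact (hreach p).symm.trans (hreach p')

/-- for `λ ≥ 1`, `n ≥ 2` with `λ ∣ n − 1` and `q = (n−1)/λ`, deleting any
set of at most `q − 1` edges from `H_{n,λ}` leaves a connected graph. -/
theorem hub_delete_few_edges_connected {lam n : ℕ} (hlam : 1 ≤ lam) (hn : 2 ≤ n)
    (hdvd : lam ∣ n - 1) (E' : Set (Sym2 (HubV lam ((n - 1) / lam))))
    (hE' : E' ⊆ (hubGraph lam ((n - 1) / lam)).edgeSet)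
    (hcard : E'.ncard ≤ (n - 1) / lam - 1) :
    ((hubGraph lam ((n - 1) / lam)).deleteEdges E').Connected := by
  have hq : 1 ≤ (n - 1) / lam := by
    rw [Nat.one_le_div_iff hlam]
    exact Nat.le_of_dvd (by omega) hdvd
  exact hub_key hq E' hcard

end BroadcastPaper
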